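/- Let 𝒢 be a path-connected topological group acting continuously on a topological space M, G a finite subgroup of 𝒢, and k a field, and assume the action Φ is trivial over k. Fix for each g ∈ G a path θ_g in 𝒢 from e to g, giving the maps τ_g : P_g M → P_e M. For g, h ∈ G, let P_g M ×_M P_h M = {(σ₁, σ₂) ∈ P_g M × P_h M : σ₂(0) = σ₁(1)}, let γ : P_g M ×_M P_h M → P_{hg} M be the concatenation map γ(σ₁, σ₂)(t) = σ₁(2t) for 0 ≤ t ≤ 1/2 and σ₂(2t−1) for 1/2 ≤ t ≤ 1, let P_e M ×_M P_e M = {(l₁, l₂) ∈ P_e M × P_e M : l₂(0) = l₁(1/2)}, let γ' : P_e M ×_M P_e M → P_e M be defined by γ'(l₁, l₂)(t) = l₁(2t) for 0 ≤ t ≤ 1/4, l₂(2t − 1/2) for 1/4 ≤ t ≤ 3/4, and l₁(2t − 1) for 3/4 ≤ t ≤ 1, and let τ_{1/2} : P_g M ×_M P_h M → P_e M ×_M P_e M be the map (σ₁, σ₂) ↦ (τ_g σ₁, τ_h σ₂). Then (τ_{hg})_* ∘ γ_* = (γ')_* ∘ (τ_{1/2})_* as maps H_*(P_g M ×_M P_h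 M; k) → H_*(P_e M; k) on singular homology with coefficients in k. (Lemma 4.2.) -/

import Mathlib

open CategoryTheory

/-- The singular homology functor `H_n(−; k)`. -/
noncomputable def singularHomologyFunctor (k : Type) [CommRing k] (n : ℕ) :
    TopCat ⥤ ModuleCat k :=
  TopCat.toSSet ⋙ ((SimplicialObject.whiskering _ _).obj (ModuleCat.free k)) ⋙
    AlgebraicTopology.alternatingFaceMapComplex (ModuleCat k) ⋙
    HomologicalComplex.homologyFunctor (ModuleCat k) (ComplexShape.down ℕ) n

/-- `H_n(X; k)`, singular homology of a topological space with coefficients in `k`. -/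
noncomputable abbrev SH (k : Type) [CommRing k] (n : ℕ) (X : Type) [TopologicalSpace X] :
    ModuleCat k :=
  (singularHomologyFunctor k n).obj (TopCat.of X)

/-- The map induced on singular homology by a continuous map. -/
noncomputable def SHmap (k : Type) [CommRing k] (n : ℕ) {X Y : Type} [TopologicalSpace X]
    [TopologicalSpace Y] (f : C(X, Y)) : SH k n X ⟶ SH k n Y :=
  (singularHomologyFunctor k n).map (TopCat.ofHom f)

/-- `P_g M`: the space of continuous paths `σ : [0,1] → M` with `σ(1) = g • σ(0)`,
with the compact-open topology; `P_e M` is canonically homeomorphic to `LM`. -/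
abbrev PSp (𝒢 : Type) [Monoid 𝒢] [TopologicalSpace 𝒢] (M : Type) [TopologicalSpace M]
    [MulAction 𝒢 M] (g : 𝒢) : Type :=
  {σ : C(unitInterval, M) // σ 1 = g • σ 0}

/-- the projection `ℝ → [0,1]`, used to express reparametrizations like `t ↦ 2t`. -/
noncomputable abbrev pr : ℝ → unitInterval := Set.projIcc 0 1 zero_le_one

/-- The action `Φ` is trivial over `k`. -/
def PhiTrivial (𝒢 : Type) [Group 𝒢] [TopologicalSpace 𝒢] (M : Type) [TopologicalSpace M]
    [MulAction 𝒢 M] (k : Type) [Field k] : Prop :=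
  ∀ a : C(unitInterval, 𝒢), a 0 = 1 → a 1 = 1 →
    ∀ F : C(PSp 𝒢 M 1, PSp 𝒢 M 1),
      (∀ (σ : PSp 𝒢 M 1) (t : unitInterval), (F σ).1 t = a t • σ.1 t) →
      ∀ n : ℕ, SHmap k n F = 𝟙 (SH k n (PSp 𝒢 M 1))

/-- `τ` is the map `τ_g : P_g M → P_e M` associated to the path `θ` from `e` to `g`. -/
def IsTau {𝒢 : Type} [Group 𝒢] [TopologicalSpace 𝒢] {M : Type} [TopologicalSpace M]
    [MulAction 𝒢 M] {g : 𝒢} (θ : C(unitInterval, 𝒢)) (τ : C(PSp 𝒢 M g, PSp 𝒢 M 1)) : Prop :=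
  ∀ (σ : PSp 𝒢 M g) (t : unitInterval),
    ((t : ℝ) ≤ 1/2 → (τ σ).1 t = σ.1 (pr (2 * (t : ℝ)))) ∧
    (1/2 ≤ (t : ℝ) → (τ σ).1 t = (θ (pr (2 * (t : ℝ) - 1)))⁻¹ • σ.1 1)

/-- The fiber product `P_g M ×_M P_h M = {(σ₁, σ₂) : σ₂(0) = σ₁(1)}`. -/
abbrev PFib (𝒢 : Type) [Monoid 𝒢] [TopologicalSpace 𝒢] (M : Type) [TopologicalSpace M]
    [MulAction 𝒢 M] (g h : 𝒢) : Type :=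
  {p : PSp 𝒢 M g × PSp 𝒢 M h // p.2.1 0 = p.1.1 1}

/-- The fiber product `P_e M ×_M P_e M = {(l₁, l₂) : l₂(0) = l₁(1/2)}`. -/
noncomputable abbrev PFibHalf (𝒢 : Type) [Monoid 𝒢] [TopologicalSpace 𝒢] (M : Type)
    [TopologicalSpace M] [MulAction 𝒢 M] : Type :=
  {p : PSp 𝒢 M 1 × PSp 𝒢 M 1 // p.2.1 0 = p.1.1 (pr (1/2))}

lemma SHmap_comp' (k : Type) [CommRing k] (n : ℕ) {X Y Z : Type} [TopologicalSpace X]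
    [TopologicalSpace Y] [TopologicalSpace Z] (f : C(X, Y)) (f' : C(Y, Z)) :
    SHmap k n (f'.comp f) = SHmap k n f ≫ SHmap k n f' := by
  rw [SHmap, SHmap, SHmap, ← Functor.map_comp]
  rfl

lemma pr_coe' {x : ℝ} (h0 : 0 ≤ x) (h1 : x ≤ 1) : ((pr x : unitInterval) : ℝ) = x := by
  simp [pr, Set.projIcc, min_eq_right h1, max_eq_right h0]
lemma pr_left' {x : ℝ} (h : x ≤ 0) : pr x = 0 := by
  apply Subtype.ext
  simp [pr, Set.projIcc, min_eq_right (h.trans zero_le_one), max_eq_left h]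
lemma pr_right' {x : ℝ} (h : 1 ≤ x) : pr x = 1 := by
  apply Subtype.ext
  simp [pr, Set.projIcc, min_eq_left h]
section AuxLoop
variable (𝒢 : Type) [Group 𝒢] [TopologicalSpace 𝒢] [IsTopologicalGroup 𝒢]
  (M : Type) [TopologicalSpace M] [MulAction 𝒢 M] [ContinuousSMul 𝒢 M]
  (θg θh θhg : C(unitInterval, 𝒢))
noncomputable def aLoop : C(unitInterval, 𝒢) :=
  ⟨fun t => (θg (pr (4*(t:ℝ)-3)))⁻¹ * ((θh (pr (4*(t:ℝ)-2)))⁻¹ * θhg (pr (2*(t:ℝ)-1))), by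
    have : Continuous (pr) := continuous_projIcc
    fun_prop⟩
lemma aLoop_apply (t : unitInterval) :
    aLoop 𝒢 θg θh θhg t =
      (θg (pr (4*(t:ℝ)-3)))⁻¹ * ((θh (pr (4*(t:ℝ)-2)))⁻¹ * θhg (pr (2*(t:ℝ)-1))) := rfl
lemma aLoop_zero (hθg0 : θg 0 = 1) (hθh0 : θh 0 = 1) (hθhg0 : θhg 0 = 1) :
    aLoop 𝒢 θg θh θhg 0 = 1 := by
  rw [aLoop_apply]
  have c0 : ((0 : unitInterval) : ℝ) = 0 := rfl
  rw [c0]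
  rw [show pr (4*(0:ℝ)-3) = 0 from pr_left' (by norm_num),
    show pr (4*(0:ℝ)-2) = 0 from pr_left' (by norm_num),
    show pr (2*(0:ℝ)-1) = 0 from pr_left' (by norm_num), hθg0, hθh0, hθhg0]
  simp
lemma aLoop_one {g h : 𝒢} (hθg1 : θg 1 = g) (hθh1 : θh 1 = h) (hθhg1 : θhg 1 = h * g) :
    aLoop 𝒢 θg θh θhg 1 = 1 := by
  rw [aLoop_apply]
  have c1 : ((1 : unitInterval) : ℝ) = 1 := rfl
  rw [c1]
  rw [show pr (4*(1:ℝ)-3) = 1 from pr_right' (by norm_num),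
    show pr (4*(1:ℝ)-2) = 1 from pr_right' (by norm_num),
    show pr (2*(1:ℝ)-1) = 1 from pr_right' (by norm_num), hθg1, hθh1, hθhg1]
  group
noncomputable def EvMap : C(C(unitInterval, M) × unitInterval, M) :=
  ⟨fun q => aLoop 𝒢 θg θh θhg q.2 • q.1 q.2,
    ((aLoop 𝒢 θg θh θhg).continuous.comp continuous_snd).smul
      ContinuousEval.continuous_eval⟩
noncomputable def PhiMap {g h : 𝒢} (hθg0 : θg 0 = 1) (hθh0 : θh 0 = 1) (hθhg0 : θhg 0 = 1)
    (hθg1 : θg 1 = g) (hθh1 : θh 1 = h) (hθhg1 : θhg 1 = h * g) :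
    C(PSp 𝒢 M 1, PSp 𝒢 M 1) := by
  refine ⟨fun σ => ⟨(EvMap 𝒢 M θg θh θhg).curry σ.1, ?_⟩, ?_⟩
  · show aLoop 𝒢 θg θh θhg 1 • σ.1 1 = (1:𝒢) • (aLoop 𝒢 θg θh θhg 0 • σ.1 0)
    rw [aLoop_zero 𝒢 θg θh θhg hθg0 hθh0 hθhg0,
      aLoop_one 𝒢 θg θh θhg hθg1 hθh1 hθhg1, σ.2]
  · exact Continuous.subtype_mk
      ((EvMap 𝒢 M θg θh θhg).curry.continuous.comp continuous_subtype_val) _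
lemma PhiMap_apply {g h : 𝒢} (hθg0 : θg 0 = 1) (hθh0 : θh 0 = 1) (hθhg0 : θhg 0 = 1)
    (hθg1 : θg 1 = g) (hθh1 : θh 1 = h) (hθhg1 : θhg 1 = h * g)
    (σ : PSp 𝒢 M 1) (t : unitInterval) :
    (PhiMap 𝒢 M θg θh θhg hθg0 hθh0 hθhg0 hθg1 hθh1 hθhg1 σ).1 t
      = aLoop 𝒢 θg θh θhg t • σ.1 t := rfl
end AuxLoop

theorem keyEq (M : Type) [TopologicalSpace M] (𝒢 : Type) [Group 𝒢] [TopologicalSpace 𝒢]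
    [IsTopologicalGroup 𝒢] [MulAction 𝒢 M] [ContinuousSMul 𝒢 M]
    (g h : 𝒢)
    (θg : C(unitInterval, 𝒢)) (hθg0 : θg 0 = 1) (hθg1 : θg 1 = g)
    (θh : C(unitInterval, 𝒢)) (hθh0 : θh 0 = 1) (hθh1 : θh 1 = h)
    (θhg : C(unitInterval, 𝒢)) (hθhg0 : θhg 0 = 1) (hθhg1 : θhg 1 = h * g)
    (τg : C(PSp 𝒢 M g, PSp 𝒢 M 1)) (hτg : IsTau θg τg)
    (τh : C(PSp 𝒢 M h, PSp 𝒢 M 1)) (hτh : IsTau θh τh)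
    (τhg : C(PSp 𝒢 M (h * g), PSp 𝒢 M 1)) (hτhg : IsTau θhg τhg)
    (γ : C(PFib 𝒢 M g h, PSp 𝒢 M (h * g)))
    (hγ : ∀ (p : PFib 𝒢 M g h) (t : unitInterval),
      ((t : ℝ) ≤ 1/2 → (γ p).1 t = p.1.1.1 (pr (2 * (t : ℝ)))) ∧
      (1/2 ≤ (t : ℝ) → (γ p).1 t = p.1.2.1 (pr (2 * (t : ℝ) - 1))))
    (γ' : C(PFibHalf 𝒢 M, PSp 𝒢 M 1))
    (hγ' : ∀ (p : PFibHalf 𝒢 M) (t : unitInterval),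
      ((t : ℝ) ≤ 1/4 → (γ' p).1 t = p.1.1.1 (pr (2 * (t : ℝ)))) ∧
      (1/4 ≤ (t : ℝ) → (t : ℝ) ≤ 3/4 → (γ' p).1 t = p.1.2.1 (pr (2 * (t : ℝ) - 1/2))) ∧
      (3/4 ≤ (t : ℝ) → (γ' p).1 t = p.1.1.1 (pr (2 * (t : ℝ) - 1))))
    (τhalf : C(PFib 𝒢 M g h, PFibHalf 𝒢 M))
    (hτhalf : ∀ p : PFib 𝒢 M g h,
      (τhalf p).1.1 = τg p.1.1 ∧ (τhalf p).1.2 = τh p.1.2) :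
    (PhiMap 𝒢 M θg θh θhg hθg0 hθh0 hθhg0 hθg1 hθh1 hθhg1).comp (τhg.comp γ)
      = γ'.comp τhalf := by
  apply ContinuousMap.ext; intro p
  apply Subtype.ext; apply ContinuousMap.ext; intro t
  show aLoop 𝒢 θg θh θhg t • (τhg (γ p)).1 t = (γ' (τhalf p)).1 t
  have ht0 : (0:ℝ) ≤ t := t.2.1
  have ht1 : (t:ℝ) ≤ 1 := t.2.2
  have hγp1 : (γ p).1 1 = p.1.2.1 1 := by
    rw [(hγ p 1).2 (by norm_num [Set.Icc.coe_one])]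
    congr 1
    rw [show (2 * ((1:unitInterval):ℝ) - 1) = 1 by norm_num]
    exact pr_right' le_rfl
  by_cases h14 : (t:ℝ) ≤ 1/4
  · have h12 : (t:ℝ) ≤ 1/2 := by linarith
    rw [(hτhg (γ p) t).1 h12]
    have hs : ((pr (2*(t:ℝ)) : unitInterval) : ℝ) = 2*t := pr_coe' (by linarith) (by linarith)
    rw [(hγ p _).1 (by rw [hs]; linarith)]
    rw [(hγ' (τhalf p) t).1 h14, (hτhalf p).1]
    rw [(hτg p.1.1 _).1 (by rw [hs]; linarith)]
    rw [hs]
    rw [show aLoop 𝒢 θg θh θhg t = 1 by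
      rw [aLoop_apply, pr_left' (show 4*(t:ℝ)-3 ≤ 0 by linarith),
        pr_left' (show 4*(t:ℝ)-2 ≤ 0 by linarith),
        pr_left' (show 2*(t:ℝ)-1 ≤ 0 by linarith), hθg0, hθh0, hθhg0]
      group]
    rw [one_smul]
  by_cases h12 : (t:ℝ) ≤ 1/2
  · have h14' : (1:ℝ)/4 ≤ t := le_of_not_ge h14
    rw [(hτhg (γ p) t).1 h12]
    have hs : ((pr (2*(t:ℝ)) : unitInterval) : ℝ) = 2*t := pr_coe' (by linarith) (by linarith)
    rw [(hγ p _).2 (by rw [hs]; linarith)]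
    rw [(hγ' (τhalf p) t).2.1 h14' (by linarith), (hτhalf p).2]
    have hs2 : ((pr (2*(t:ℝ)-1/2) : unitInterval) : ℝ) = 2*t-1/2 :=
      pr_coe' (by linarith) (by linarith)
    rw [(hτh p.1.2 _).1 (by rw [hs2]; linarith)]
    rw [hs, hs2, show 2*(2*(t:ℝ))-1 = 2*(2*(t:ℝ)-1/2) by ring]
    rw [show aLoop 𝒢 θg θh θhg t = 1 by
      rw [aLoop_apply, pr_left' (show 4*(t:ℝ)-3 ≤ 0 by linarith),
        pr_left' (show 4*(t:ℝ)-2 ≤ 0 by linarith),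
        pr_left' (show 2*(t:ℝ)-1 ≤ 0 by linarith), hθg0, hθh0, hθhg0]
      group]
    rw [one_smul]
  have h12' : (1:ℝ)/2 ≤ t := le_of_not_ge h12
  rw [(hτhg (γ p) t).2 h12', hγp1]
  by_cases h34 : (t:ℝ) ≤ 3/4
  · rw [(hγ' (τhalf p) t).2.1 (by linarith) h34, (hτhalf p).2]
    have hs2 : ((pr (2*(t:ℝ)-1/2) : unitInterval) : ℝ) = 2*t-1/2 :=
      pr_coe' (by linarith) (by linarith)
    rw [(hτh p.1.2 _).2 (by rw [hs2]; linarith)]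
    rw [hs2, show 2*(2*(t:ℝ)-1/2)-1 = 4*(t:ℝ)-2 by ring]
    rw [aLoop_apply, pr_left' (show 4*(t:ℝ)-3 ≤ 0 by linarith), hθg0]
    rw [smul_smul]
    congr 1
    group
  · have h34' : (3:ℝ)/4 ≤ t := le_of_not_ge h34
    rw [(hγ' (τhalf p) t).2.2 h34', (hτhalf p).1]
    have hs2 : ((pr (2*(t:ℝ)-1) : unitInterval) : ℝ) = 2*t-1 :=
      pr_coe' (by linarith) (by linarith)
    rw [(hτg p.1.1 _).2 (by rw [hs2]; linarith)]
    rw [hs2, show 2*(2*(t:ℝ)-1)-1 = 4*(t:ℝ)-3 by ring]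
    have hend : p.1.1.1 1 = h⁻¹ • p.1.2.1 1 := by
      rw [← p.2, p.1.2.2, inv_smul_smul]
    rw [hend]
    rw [aLoop_apply, pr_right' (show (1:ℝ) ≤ 4*(t:ℝ)-2 by linarith), hθh1]
    rw [smul_smul, smul_smul]
    congr 1
    group


/-- Lemma 4.2.  With `𝒢` path-connected acting continuously on `M`, `G` a
finite subgroup of `𝒢`, `k` a field over which the action `Φ` is trivial, paths `θ_g` from
`e` to each `g ∈ G` giving the maps `τ_g : P_g M → P_e M`; with `γ : P_g M ×_M P_h M → P_{hg} M`
the concatenation, `γ' : P_e M ×_M P_e M → P_e M` the "concatenation at mid-point" map, and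
`τ_{1/2} = τ_g × τ_h` the induced map of fiber products, we have
`(τ_{hg})_* ∘ γ_* = (γ')_* ∘ (τ_{1/2})_*` on singular homology with coefficients in `k`. -/
theorem stmt8 (M : Type) [TopologicalSpace M] (𝒢 : Type) [Group 𝒢] [TopologicalSpace 𝒢]
    [IsTopologicalGroup 𝒢] [PathConnectedSpace 𝒢] [MulAction 𝒢 M] [ContinuousSMul 𝒢 M]
    (G : Subgroup 𝒢) [Finite G] (k : Type) [Field k]
    (htriv : PhiTrivial 𝒢 M k)
    (g h : 𝒢) (hg : g ∈ G) (hh : h ∈ G)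
    (θg : C(unitInterval, 𝒢)) (hθg0 : θg 0 = 1) (hθg1 : θg 1 = g)
    (θh : C(unitInterval, 𝒢)) (hθh0 : θh 0 = 1) (hθh1 : θh 1 = h)
    (θhg : C(unitInterval, 𝒢)) (hθhg0 : θhg 0 = 1) (hθhg1 : θhg 1 = h * g)
    (τg : C(PSp 𝒢 M g, PSp 𝒢 M 1)) (hτg : IsTau θg τg)
    (τh : C(PSp 𝒢 M h, PSp 𝒢 M 1)) (hτh : IsTau θh τh)
    (τhg : C(PSp 𝒢 M (h * g), PSp 𝒢 M 1)) (hτhg : IsTau θhg τhg)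
    (γ : C(PFib 𝒢 M g h, PSp 𝒢 M (h * g)))
    (hγ : ∀ (p : PFib 𝒢 M g h) (t : unitInterval),
      ((t : ℝ) ≤ 1/2 → (γ p).1 t = p.1.1.1 (pr (2 * (t : ℝ)))) ∧
      (1/2 ≤ (t : ℝ) → (γ p).1 t = p.1.2.1 (pr (2 * (t : ℝ) - 1))))
    (γ' : C(PFibHalf 𝒢 M, PSp 𝒢 M 1))
    (hγ' : ∀ (p : PFibHalf 𝒢 M) (t : unitInterval),
      ((t : ℝ) ≤ 1/4 → (γ' p).1 t = p.1.1.1 (pr (2 * (t : ℝ)))) ∧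
      (1/4 ≤ (t : ℝ) → (t : ℝ) ≤ 3/4 → (γ' p).1 t = p.1.2.1 (pr (2 * (t : ℝ) - 1/2))) ∧
      (3/4 ≤ (t : ℝ) → (γ' p).1 t = p.1.1.1 (pr (2 * (t : ℝ) - 1))))
    (τhalf : C(PFib 𝒢 M g h, PFibHalf 𝒢 M))
    (hτhalf : ∀ p : PFib 𝒢 M g h,
      (τhalf p).1.1 = τg p.1.1 ∧ (τhalf p).1.2 = τh p.1.2) :
    ∀ n : ℕ, SHmap k n γ ≫ SHmap k n τhg = SHmap k n τhalf ≫ SHmap k n γ' := by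
  intro n
  have hid := htriv (aLoop 𝒢 θg θh θhg)
    (aLoop_zero 𝒢 θg θh θhg hθg0 hθh0 hθhg0)
    (aLoop_one 𝒢 θg θh θhg hθg1 hθh1 hθhg1)
    (PhiMap 𝒢 M θg θh θhg hθg0 hθh0 hθhg0 hθg1 hθh1 hθhg1)
    (fun σ t => rfl) n
  have hcomp := keyEq M 𝒢 g h θg hθg0 hθg1 θh hθh0 hθh1 θhg hθhg0 hθhg1
    τg hτg τh hτh τhg hτhg γ hγ γ' hγ' τhalf hτhalf
  calc SHmap k n γ ≫ SHmap k n τhg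
      = SHmap k n (τhg.comp γ) := (SHmap_comp' k n γ τhg).symm
    _ = SHmap k n (τhg.comp γ) ≫
          SHmap k n (PhiMap 𝒢 M θg θh θhg hθg0 hθh0 hθhg0 hθg1 hθh1 hθhg1) := by
        rw [hid, CategoryTheory.Category.comp_id]
    _ = SHmap k n ((PhiMap 𝒢 M θg θh θhg hθg0 hθh0 hθhg0 hθg1 hθh1 hθhg1).comp
          (τhg.comp γ)) := (SHmap_comp' k n _ _).symm
    _ = SHmap k n (γ'.comp τhalf) := by rw [hcomp]
    _ = SHmap k n τhalf ≫ SHmap k n γ' := SHmap_comp' k n τhalf γ'
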